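/- Let σ, τ be full-dimensional simplices of a triangulation in ℝ^d with σ ≺ τ in the stabbing order (σ ≠ τ). Then there exists a vector r ∈ ℝ^d \ {0} and scalars 0 ≤ λ < μ with λr ∈ σ and μr ∈ τ. -/

import Mathlib

open Matrix

section ConeLemmas
variable {F : Type*} [NormedAddCommGroup F] [NormedSpace ℝ F] [FiniteDimensional ℝ F]

/-- Conic Carathéodory: a nonnegative combination over `s` can be rewritten as a
nonnegative combination over a linearly independent subset of `s`. -/
lemma cone_carath {ι : Type*} [Fintype ι] (v : ι → F) :
    ∀ s : Finset ι, ∀ x : F,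
      (∃ c : ι → ℝ, (∀ i, 0 ≤ c i) ∧ x = ∑ i ∈ s, c i • v i) →
      ∃ t : Finset ι, t ⊆ s ∧ LinearIndependent ℝ (fun i : ↥t => v ↑i) ∧
        ∃ c : ι → ℝ, (∀ i, 0 ≤ c i) ∧ x = ∑ i ∈ t, c i • v i := by
  classical
  intro s
  induction s using Finset.strongInductionOn with
  | _ s ih =>
    intro x hx
    obtain ⟨c, hc0, hcx⟩ := hx
    by_cases hli : LinearIndependent ℝ (fun i : ↥s => v ↑i)
    · exact ⟨s, subset_rfl, hli, c, hc0, hcx⟩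
    · obtain ⟨g, hgsum, i0, hgi0⟩ := Fintype.not_linearIndependent_iff.mp hli
      set d0 : ι → ℝ := fun i => if h : i ∈ s then g ⟨i, h⟩ else 0 with hd0
      have hdsum : ∑ i ∈ s, d0 i • v i = 0 := by
        rw [← Finset.sum_coe_sort s (fun i => d0 i • v i)]
        rw [← hgsum]
        apply Finset.sum_congr rfl
        intro i _
        simp [hd0, i.2]
      have hdex : ∃ d : ι → ℝ, (∑ i ∈ s, d i • v i = 0) ∧ ∃ i ∈ s, 0 < d i := by
        rcases lt_or_gt_of_ne hgi0 with h | h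
        · refine ⟨-d0, by simp [hdsum], i0, i0.2, ?_⟩
          simp only [hd0, Pi.neg_apply, dif_pos i0.2]
          simpa using h
        · exact ⟨d0, hdsum, i0, i0.2, by simp only [hd0, dif_pos i0.2]; simpa using h⟩
      obtain ⟨d, hdsum, iw, hiws, hiwpos⟩ := hdex
      have hTne : (s.filter fun i => 0 < d i).Nonempty := ⟨iw, Finset.mem_filter.mpr ⟨hiws, hiwpos⟩⟩
      obtain ⟨i₁, hi₁, hmin⟩ := Finset.exists_min_image (s.filter fun i => 0 < d i)
        (fun i => c i / d i) hTne
      obtain ⟨hi₁s, hi₁pos⟩ := Finset.mem_filter.mp hi₁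
      set t0 : ℝ := c i₁ / d i₁ with ht0
      have ht0nn : 0 ≤ t0 := div_nonneg (hc0 i₁) hi₁pos.le
      set c' : ι → ℝ := fun i => if i ∈ s then c i - t0 * d i else 0 with hc'
      have hc'0 : ∀ i, 0 ≤ c' i := by
        intro i
        simp only [hc']
        split
        · rename_i his
          by_cases hdi : 0 < d i
          · have h2 := (le_div_iff₀ hdi).mp (hmin i (Finset.mem_filter.mpr ⟨his, hdi⟩))
            linarith
          · push_neg at hdi
            nlinarith [hc0 i, mul_nonpos_of_nonneg_of_nonpos ht0nn hdi]
        · exact le_rfl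
      have hc'i₁ : c' i₁ = 0 := by
        simp only [hc', if_pos hi₁s, ht0]
        field_simp
        simp
      have hx' : x = ∑ i ∈ s.erase i₁, c' i • v i := by
        rw [Finset.sum_erase _ (by rw [hc'i₁, zero_smul])]
        have : ∑ i ∈ s, c' i • v i = ∑ i ∈ s, (c i • v i - t0 • (d i • v i)) := by
          apply Finset.sum_congr rfl
          intro i his
          simp only [hc', if_pos his, sub_smul, smul_smul]
        rw [this, Finset.sum_sub_distrib, ← Finset.smul_sum, hdsum, smul_zero, sub_zero, hcx]
      obtain ⟨t, hts, hli', hrep⟩ := ih (s.erase i₁) (Finset.erase_ssubset hi₁s) x ⟨c', hc'0, hx'⟩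
      exact ⟨t, hts.trans (Finset.erase_subset _ _), hli', hrep⟩

lemma cone_closed_of_li {ι : Type*} [Fintype ι] (v : ι → F)
    (hv : LinearIndependent ℝ v) :
    IsClosed {x : F | ∃ c : ι → ℝ, (∀ i, 0 ≤ c i) ∧ x = ∑ i, c i • v i} := by
  classical
  let φ : (ι → ℝ) →ₗ[ℝ] F :=
    { toFun := fun c => ∑ i, c i • v i
      map_add' := by
        intro a b
        simp [add_smul, Finset.sum_add_distrib]
      map_smul' := by
        intro m a
        simp [smul_smul, Finset.smul_sum] }
  have hker : LinearMap.ker φ = ⊥ := by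
    rw [LinearMap.ker_eq_bot']
    intro m hm
    have := Fintype.linearIndependent_iff.mp hv m hm
    funext i; exact this i
  have hmap := (LinearMap.isClosedEmbedding_of_injective hker).isClosedMap
  have horth : IsClosed {c : ι → ℝ | ∀ i, 0 ≤ c i} := by
    have : {c : ι → ℝ | ∀ i, 0 ≤ c i} = ⋂ i, {c : ι → ℝ | 0 ≤ c i} := by
      ext c; simp
    rw [this]
    exact isClosed_iInter fun i => isClosed_le continuous_const (continuous_apply i)
  have := hmap _ horth
  convert this using 1
  ext x
  constructor
  · rintro ⟨c, hc, rfl⟩; exact ⟨c, hc, rfl⟩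
  · rintro ⟨c, hc, rfl⟩; exact ⟨c, hc, rfl⟩

lemma cone_closed {ι : Type*} [Fintype ι] (v : ι → F) :
    IsClosed {x : F | ∃ c : ι → ℝ, (∀ i, 0 ≤ c i) ∧ x = ∑ i, c i • v i} := by
  classical
  have hunion : {x : F | ∃ c : ι → ℝ, (∀ i, 0 ≤ c i) ∧ x = ∑ i, c i • v i} =
      ⋃ t ∈ {t : Finset ι | LinearIndependent ℝ (fun i : ↥t => v ↑i)},
        {x : F | ∃ c : ↥t → ℝ, (∀ i, 0 ≤ c i) ∧ x = ∑ i : ↥t, c i • v ↑i} := by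
    ext x
    simp only [Set.mem_setOf_eq, Set.mem_iUnion]
    constructor
    · rintro ⟨c, hc, rfl⟩
      obtain ⟨t, -, hli, c', hc', hrep⟩ := cone_carath v Finset.univ (∑ i, c i • v i)
        ⟨c, hc, rfl⟩
      refine ⟨t, hli, fun i => c' ↑i, fun i => hc' ↑i, ?_⟩
      rw [hrep, ← Finset.sum_coe_sort t (fun i => c' i • v i)]
    · rintro ⟨t, hli, c, hc, rfl⟩
      refine ⟨fun i => if h : i ∈ t then c ⟨i, h⟩ else 0, ?_, ?_⟩
      · intro i
        dsimp only
        split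
        · exact hc _
        · exact le_rfl
      · rw [← Finset.sum_subset (Finset.subset_univ t) (by intro i _ hit; simp [dif_neg hit])]
        rw [← Finset.sum_coe_sort t]
        apply Finset.sum_congr rfl
        intro i _
        simp [i.2]
  rw [hunion]
  exact Set.Finite.isClosed_biUnion (Set.toFinite _) fun t ht => cone_closed_of_li _ ht

/-- Farkas-type lemma: if `b` is not in the cone generated by the `v i`, there is a
linear functional nonnegative on all `v i` and negative at `b`. -/
lemma cone_farkas {ι : Type*} [Fintype ι] (v : ι → F) (b : F)
    (hb : b ∉ {x : F | ∃ c : ι → ℝ, (∀ i, 0 ≤ c i) ∧ x = ∑ i, c i • v i}) :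
    ∃ f : F →L[ℝ] ℝ, (∀ i, 0 ≤ f (v i)) ∧ f b < 0 := by
  classical
  have hconv : Convex ℝ {x : F | ∃ c : ι → ℝ, (∀ i, 0 ≤ c i) ∧ x = ∑ i, c i • v i} := by
    rintro x ⟨cx, hcx, rfl⟩ y ⟨cy, hcy, rfl⟩ a b' ha hb' hab
    refine ⟨fun i => a * cx i + b' * cy i,
      fun i => add_nonneg (mul_nonneg ha (hcx i)) (mul_nonneg hb' (hcy i)), ?_⟩
    rw [Finset.smul_sum, Finset.smul_sum, ← Finset.sum_add_distrib]
    apply Finset.sum_congr rfl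
    intro i _
    simp [add_smul, smul_smul]
  obtain ⟨f, u, hfb, hfN⟩ := geometric_hahn_banach_point_closed hconv (cone_closed v) hb
  have h0 : (0 : F) ∈ {x : F | ∃ c : ι → ℝ, (∀ i, 0 ≤ c i) ∧ x = ∑ i, c i • v i} :=
    ⟨0, fun i => le_rfl, by simp⟩
  have hu0 : u < 0 := by simpa using hfN 0 h0
  refine ⟨f, fun i => ?_, by linarith⟩
  by_contra hneg
  push_neg at hneg
  have hmem : (u / f (v i)) • v i ∈
      {x : F | ∃ c : ι → ℝ, (∀ i, 0 ≤ c i) ∧ x = ∑ i, c i • v i} := by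
    refine ⟨fun j => if j = i then u / f (v i) else 0, ?_, ?_⟩
    · intro j
      dsimp only
      split
      · exact le_of_lt (div_pos_of_neg_of_neg hu0 hneg)
      · exact le_rfl
    · simp [ite_smul]
  have := hfN _ hmem
  rw [f.map_smul, smul_eq_mul, div_mul_cancel₀ _ (ne_of_lt hneg)] at this
  exact lt_irrefl u this

end ConeLemmas

section Rep

/-- Every continuous linear functional on `(Fin d → ℝ) × ℝ`, restricted (negated) to the
first factor, is represented by a dot product. -/
lemma dot_rep {d : ℕ} (f : ((Fin d → ℝ) × ℝ) →L[ℝ] ℝ) :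
    ∃ a : Fin d → ℝ, ∀ x : Fin d → ℝ, a ⬝ᵥ x = -f (x, 0) := by
  refine ⟨fun i => -f (Pi.single i 1, 0), fun x => ?_⟩
  have hx : ((x, (0:ℝ)) : (Fin d → ℝ) × ℝ)
      = ∑ i, (x i) • ((Pi.single i 1 : Fin d → ℝ), (0:ℝ)) := by
    have h1 : x = ∑ i, x i • (Pi.single i 1 : Fin d → ℝ) := by
      have := Finset.univ_sum_single x
      rw [← this]
      apply Finset.sum_congr rfl
      intro i _
      funext j
      simp only [Pi.smul_apply, Pi.single_apply, smul_eq_mul]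
      split <;> simp
    rw [Prod.ext_iff]
    constructor
    · simpa [Prod.fst_sum] using h1
    · simp [Prod.snd_sum]
  rw [hx, map_sum]
  simp only [_root_.map_smul, smul_eq_mul]
  rw [dotProduct]
  rw [← Finset.sum_neg_distrib]
  apply Finset.sum_congr rfl
  intro i _
  ring

end Rep

def WeaklySep {d : ℕ} (a : Fin d → ℝ) (b : ℝ) (σ τ : Set (Fin d → ℝ)) : Prop :=
  (∀ x ∈ σ, a ⬝ᵥ x ≤ b) ∧ ∀ y ∈ τ, b ≤ a ⬝ᵥ y

def StabLE {d : ℕ} (σ τ : Set (Fin d → ℝ)) : Prop :=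
  σ = τ ∨
    ((∀ (a : Fin d → ℝ) (b : ℝ), a ≠ 0 → WeaklySep a b σ τ → 0 ≤ b) ∧
     (∀ (a : Fin d → ℝ) (b : ℝ), a ≠ 0 → WeaklySep a b τ σ → b ≤ 0) ∧
     ∃ (a : Fin d → ℝ) (b : ℝ), a ≠ 0 ∧ b ≠ 0 ∧
       (WeaklySep a b σ τ ∨ WeaklySep a b τ σ))

theorem stmt16 {d : ℕ} (Vσ Vτ : Finset (Fin d → ℝ))
    (hVσ : AffineIndependent ℝ (Subtype.val : ↥(Vσ : Set (Fin d → ℝ)) → (Fin d → ℝ)))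
    (hVτ : AffineIndependent ℝ (Subtype.val : ↥(Vτ : Set (Fin d → ℝ)) → (Fin d → ℝ)))
    (hcσ : Vσ.card = d + 1) (hcτ : Vτ.card = d + 1)
    (σ τ : Set (Fin d → ℝ))
    (hσdef : σ = convexHull ℝ ↑Vσ) (hτdef : τ = convexHull ℝ ↑Vτ)
    (Fσ : Finset (Fin d → ℝ)) (hFσ : Fσ ⊆ Vσ) (hfσ : σ ∩ τ = convexHull ℝ ↑Fσ)
    (Fτ : Finset (Fin d → ℝ)) (hFτ : Fτ ⊆ Vτ) (hfτ : σ ∩ τ = convexHull ℝ ↑Fτ)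
    (hlt : StabLE σ τ) (hne : σ ≠ τ) :
    ∃ r : Fin d → ℝ, r ≠ 0 ∧ ∃ l m : ℝ, 0 ≤ l ∧ l < m ∧ l • r ∈ σ ∧ m • r ∈ τ := by
  classical
  obtain ⟨H1, H2, a₀, b₀, ha₀, hb₀, hw⟩ := hlt.resolve_left hne
  -- every point of τ is nonzero
  have hτ0 : ∀ y ∈ τ, y ≠ 0 := by
    rcases hw with h | h
    · have hb₀pos : 0 < b₀ := lt_of_le_of_ne (H1 a₀ b₀ ha₀ h) (Ne.symm hb₀)
      intro y hy hy0
      have := h.2 y hy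
      rw [hy0] at this
      simp only [dotProduct_zero] at this
      linarith
    · have hb₀neg : b₀ < 0 := lt_of_le_of_ne (H2 a₀ b₀ ha₀ h) hb₀
      intro y hy hy0
      have := h.1 y hy
      rw [hy0] at this
      simp only [dotProduct_zero] at this
      linarith
  have hVσne : Vσ.Nonempty := Finset.card_pos.mp (by omega)
  have hVτne : Vτ.Nonempty := Finset.card_pos.mp (by omega)
  -- the key claim: some point of σ is t • y with y ∈ τ, 0 ≤ t < 1
  have key : ∃ y ∈ τ, ∃ t : ℝ, 0 ≤ t ∧ t < 1 ∧ t • y ∈ σ := by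
    by_contra hcon
    push_neg at hcon
    set v : (↥Vσ ⊕ ↥Vτ) → (Fin d → ℝ) × ℝ :=
      Sum.elim (fun p => ((p : Fin d → ℝ), 1)) (fun q => (-(q : Fin d → ℝ), -1)) with hv
    have hbnot : (((0 : Fin d → ℝ), (1:ℝ)) : (Fin d → ℝ) × ℝ) ∉
        {x : (Fin d → ℝ) × ℝ | ∃ c : (↥Vσ ⊕ ↥Vτ) → ℝ, (∀ i, 0 ≤ c i) ∧ x = ∑ i, c i • v i} := by
      rintro ⟨c, hc, hsum⟩
      rw [Fintype.sum_sum_type] at hsum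
      set Λ : ℝ := ∑ p : ↥Vσ, c (Sum.inl p) with hΛ
      set M : ℝ := ∑ q : ↥Vτ, c (Sum.inr q) with hM
      set SP : Fin d → ℝ := ∑ p : ↥Vσ, c (Sum.inl p) • (p : Fin d → ℝ) with hSP
      set SQ : Fin d → ℝ := ∑ q : ↥Vτ, c (Sum.inr q) • (q : Fin d → ℝ) with hSQ
      have hfst : (0 : Fin d → ℝ) = SP - SQ := by
        have := congrArg Prod.fst hsum
        simpa [hv, Prod.fst_sum, smul_neg, Finset.sum_neg_distrib, sub_eq_add_neg,
          hSP, hSQ] using this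
      have hsnd : (1 : ℝ) = Λ - M := by
        have := congrArg Prod.snd hsum
        simpa [hv, Prod.snd_sum, mul_comm, sub_eq_add_neg, hΛ, hM] using this
      have hΛnn : 0 ≤ Λ := Finset.sum_nonneg fun p _ => hc _
      have hMnn : 0 ≤ M := Finset.sum_nonneg fun q _ => hc _
      have hΛpos : 0 < Λ := by linarith
      have hxσ : (Λ⁻¹ • SP) ∈ σ := by
        rw [hσdef]
        have := Finset.centerMass_mem_convexHull (Finset.univ : Finset ↥Vσ)
          (w := fun p => c (Sum.inl p)) (z := fun p => (p : Fin d → ℝ))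
          (fun p _ => hc _) (by rw [← hΛ]; exact hΛpos) (fun p _ => p.2)
        simpa [Finset.centerMass, hΛ, hSP] using this
      by_cases hM0 : M = 0
      · have hq0 : ∀ q : ↥Vτ, c (Sum.inr q) = 0 := by
          intro q
          have hsum0 : ∑ q ∈ (Finset.univ : Finset ↥Vτ), c (Sum.inr q) = 0 := by
            rw [← hM]; exact hM0
          exact (Finset.sum_eq_zero_iff_of_nonneg (fun q _ => hc (Sum.inr q))).mp hsum0
            q (Finset.mem_univ q)
        have hSQ0 : SQ = 0 := by
          rw [hSQ]
          exact Finset.sum_eq_zero fun q _ => by rw [hq0 q, zero_smul]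
        have hSP0 : SP = 0 := by
          rw [hSQ0] at hfst
          simpa using hfst.symm
        have h0σ : (0 : Fin d → ℝ) ∈ σ := by
          have := hxσ
          rw [hSP0, smul_zero] at this
          exact this
        obtain ⟨q0, hq0'⟩ := hVτne
        have hyτ : (q0 : Fin d → ℝ) ∈ τ := hτdef ▸ subset_convexHull ℝ _ hq0'
        exact hcon _ hyτ 0 le_rfl zero_lt_one (by simpa using h0σ)
      · have hMpos : 0 < M := lt_of_le_of_ne hMnn (Ne.symm hM0)
        have hyτ : (M⁻¹ • SQ) ∈ τ := by
          rw [hτdef]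
          have := Finset.centerMass_mem_convexHull (Finset.univ : Finset ↥Vτ)
            (w := fun q => c (Sum.inr q)) (z := fun q => (q : Fin d → ℝ))
            (fun q _ => hc _) (by rw [← hM]; exact hMpos) (fun q _ => q.2)
          simpa [Finset.centerMass, hM, hSQ] using this
        have hSPQ : SP = SQ := sub_eq_zero.mp hfst.symm
        have htlt : M / Λ < 1 := (div_lt_one hΛpos).mpr (by linarith)
        have htnn : (0:ℝ) ≤ M / Λ := div_nonneg hMnn hΛnn
        have heq : (M / Λ) • (M⁻¹ • SQ) = Λ⁻¹ • SP := by
          rw [hSPQ, smul_smul]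
          congr 1
          rw [div_eq_mul_inv, mul_comm M Λ⁻¹, mul_assoc, mul_inv_cancel₀ hM0, mul_one]
        exact hcon _ hyτ (M / Λ) htnn htlt (heq ▸ hxσ)
    obtain ⟨f, hfv, hfb⟩ := cone_farkas v _ hbnot
    set γ : ℝ := -f ((0 : Fin d → ℝ), (1:ℝ)) with hγ
    have hγpos : 0 < γ := neg_pos.mpr hfb
    obtain ⟨a, ha_rep⟩ := dot_rep f
    have hdecomp : ∀ x : Fin d → ℝ, ((x, (1:ℝ)) : (Fin d → ℝ) × ℝ) = (x, 0) + (0, 1) := by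
      intro x
      simp [Prod.ext_iff]
    have hfP : ∀ p ∈ Vσ, γ ≤ f (p, 0) := by
      intro p hp
      have h := hfv (Sum.inl ⟨p, hp⟩)
      simp only [hv, Sum.elim_inl] at h
      rw [hdecomp, map_add] at h
      rw [hγ]
      linarith
    have hfQ : ∀ q ∈ Vτ, f (q, 0) ≤ γ := by
      intro q hq
      have h := hfv (Sum.inr ⟨q, hq⟩)
      simp only [hv, Sum.elim_inr] at h
      have hneg : ((-(q : Fin d → ℝ), (-1:ℝ)) : (Fin d → ℝ) × ℝ) = -((q : Fin d → ℝ), (1:ℝ)) := by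
        simp [Prod.ext_iff]
      rw [hneg, map_neg, hdecomp, map_add] at h
      rw [hγ]
      linarith
    have hlin : IsLinearMap ℝ (fun x : Fin d → ℝ => a ⬝ᵥ x) := by
      constructor
      · intro x y
        simp [dotProduct_add]
      · intro c x
        simp [dotProduct_smul]
    have hsep : WeaklySep a (-γ) σ τ := by
      constructor
      · intro x hx
        rw [hσdef] at hx
        refine convexHull_min (fun p hp => ?_) (convex_halfSpace_le hlin (-γ)) hx
        simp only [Set.mem_setOf_eq]
        rw [ha_rep]
        have := hfP p hp
        linarith
      · intro y hy
        rw [hτdef] at hy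
        refine convexHull_min (fun q hq => ?_) (convex_halfSpace_ge hlin (-γ)) hy
        simp only [Set.mem_setOf_eq]
        rw [ha_rep]
        have := hfQ q hq
        linarith
    have ha : a ≠ 0 := by
      intro h0
      obtain ⟨p0, hp0⟩ := hVσne
      have h1 := hfP p0 hp0
      have h2 := ha_rep p0
      rw [h0, zero_dotProduct] at h2
      linarith
    have := H1 a (-γ) ha hsep
    linarith
  obtain ⟨y, hy, t, ht0, ht1, htσ⟩ := key
  exact ⟨y, hτ0 y hy, t, 1, ht0, ht1, htσ, by simpa using hy⟩
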